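/- Suppose η : ℝ → ℝ is continuous and there exists δ₀ > 0 such that ∫_ξ^t η(s) ds ≥ δ₀·(t-ξ) for all 0 ≤ ξ ≤ t. If a nonnegative differentiable function w satisfies w'(t) + η(t)·w(t) ≤ F_max for all t ∈ [0,T], with w(0) = 0 and F_max ≥ 0 a constant, then w(t) ≤ (1 - exp(-δ₀·t))/δ₀ · F_max for all t ∈ [0,T]. -/

import Mathlib

open Real

theorem forcing_error_estimate
    (w η : ℝ → ℝ) (δ₀ Fmax T : ℝ)
    (hδ₀ : 0 < δ₀)
    (hη : Continuous η)
    (hθ : ∀ ξ t : ℝ, 0 ≤ ξ → ξ ≤ t → δ₀ * (t - ξ) ≤ ∫ s in ξ..t, η s)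
    (hw : Differentiable ℝ w)
    (hwpos : ∀ t ≥ (0:ℝ), 0 ≤ w t)
    (hFmax : 0 ≤ Fmax)
    (hineq : ∀ t ∈ Set.Icc (0:ℝ) T, deriv w t + η t * w t ≤ Fmax)
    (hw0 : w 0 = 0) :
    ∀ t ∈ Set.Icc (0:ℝ) T, w t ≤ (1 - Real.exp (-δ₀ * t)) / δ₀ * Fmax := by
  intro t ht
  obtain ⟨ht0, htT⟩ := ht
  set Θ : ℝ → ℝ := fun u => ∫ s in (0:ℝ)..u, η s with hΘdef
  have hΘd : ∀ u : ℝ, HasDerivAt Θ (η u) u := by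
    intro u
    exact intervalIntegral.integral_hasDerivAt_right (hη.intervalIntegrable _ _)
      (hη.stronglyMeasurableAtFilter _ _) hη.continuousAt
  have hΘcont : Continuous Θ :=
    Differentiable.continuous (fun u => (hΘd u).differentiableAt)
  set g : ℝ → ℝ := fun u => Real.exp (Θ u) * w u with hgdef
  have hgd : ∀ u : ℝ, HasDerivAt g (Real.exp (Θ u) * (η u * w u + deriv w u)) u := by
    intro u
    have h1 := ((hΘd u).exp).mul (hw u).hasDerivAt
    exact h1.congr_deriv (by ring)
  set I : ℝ → ℝ := fun u => ∫ s in (0:ℝ)..u, Real.exp (Θ s) * Fmax with hIdef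
  have hIcont : Continuous fun s => Real.exp (Θ s) * Fmax :=
    (hΘcont.rexp).mul continuous_const
  have hId : ∀ u : ℝ, HasDerivAt I (Real.exp (Θ u) * Fmax) u := by
    intro u
    exact intervalIntegral.integral_hasDerivAt_right (hIcont.intervalIntegrable _ _)
      (hIcont.stronglyMeasurableAtFilter _ _) hIcont.continuousAt
  -- g - I is antitone on [0,T]
  have hanti : AntitoneOn (fun u => g u - I u) (Set.Icc (0:ℝ) T) := by
    apply antitoneOn_of_deriv_nonpos (convex_Icc 0 T)
    · exact (Continuous.sub (Differentiable.continuous (fun u => (hgd u).differentiableAt))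
        (Differentiable.continuous (fun u => (hId u).differentiableAt))).continuousOn
    · intro x _
      exact (((hgd x).sub (hId x)).differentiableAt).differentiableWithinAt
    · intro x hx
      have hx' : x ∈ Set.Icc (0:ℝ) T := interior_subset hx
      rw [show (fun u => g u - I u) = g - I from rfl, ((hgd x).sub (hId x)).deriv]
      have h2 : η x * w x + deriv w x ≤ Fmax := by
        have := hineq x hx'
        linarith
      have h3 : (0:ℝ) < Real.exp (Θ x) := Real.exp_pos _
      nlinarith
  have hg0 : g 0 = 0 := by simp [hgdef, hw0]
  have hI0 : I 0 = 0 := by simp [hIdef]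
  have hgI : g t ≤ I t := by
    have := hanti (Set.mem_Icc.mpr ⟨le_refl 0, le_trans ht0 htT⟩)
      (Set.mem_Icc.mpr ⟨ht0, htT⟩) ht0
    simp only [hg0, hI0] at this
    linarith
  -- w t ≤ exp (-Θ t) * I t
  have hwle : w t ≤ Real.exp (-(Θ t)) * I t := by
    have h3 : (0:ℝ) < Real.exp (Θ t) := Real.exp_pos _
    have h4 : Real.exp (-(Θ t)) * Real.exp (Θ t) = 1 := by
      rw [← Real.exp_add]; simp
    calc w t = Real.exp (-(Θ t)) * (Real.exp (Θ t) * w t) := by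
          rw [← mul_assoc, h4, one_mul]
      _ ≤ Real.exp (-(Θ t)) * I t := by
          exact mul_le_mul_of_nonneg_left hgI (Real.exp_pos _).le
  have hrw : Real.exp (-(Θ t)) * I t = ∫ s in (0:ℝ)..t, Real.exp (Θ s - Θ t) * Fmax := by
    rw [hIdef, ← intervalIntegral.integral_const_mul]
    congr 1
    funext s
    rw [Real.exp_sub, Real.exp_neg]
    field_simp
  -- pointwise bound on the integrand
  have hmono : (∫ s in (0:ℝ)..t, Real.exp (Θ s - Θ t) * Fmax)
      ≤ ∫ s in (0:ℝ)..t, Real.exp (-δ₀ * (t - s)) * Fmax := by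
    apply intervalIntegral.integral_mono_on ht0
    · exact ((hΘcont.sub continuous_const).rexp.mul continuous_const).intervalIntegrable _ _
    · exact ((continuous_const.mul (continuous_const.sub continuous_id)).rexp.mul
        continuous_const).intervalIntegrable _ _
    · intro s hs
      obtain ⟨hs0, hst⟩ := hs
      have hdiff : Θ t - Θ s = ∫ u in s..t, η u := by
        rw [hΘdef]
        exact intervalIntegral.integral_interval_sub_left (hη.intervalIntegrable _ _)
          (hη.intervalIntegrable _ _)
      have h5 : δ₀ * (t - s) ≤ Θ t - Θ s := hdiff ▸ hθ s t hs0 hst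
      have h6 : Θ s - Θ t ≤ -δ₀ * (t - s) := by linarith
      exact mul_le_mul_of_nonneg_right (Real.exp_le_exp.mpr h6) hFmax
  -- compute the last integral
  have hcalc : (∫ s in (0:ℝ)..t, Real.exp (-δ₀ * (t - s)) * Fmax)
      = (1 - Real.exp (-δ₀ * t)) / δ₀ * Fmax := by
    have hA : ∀ s : ℝ, HasDerivAt (fun s => Real.exp (-δ₀ * (t - s)) / δ₀ * Fmax)
        (Real.exp (-δ₀ * (t - s)) * Fmax) s := by
      intro s
      have h1 : HasDerivAt (fun s : ℝ => -δ₀ * (t - s)) δ₀ s := by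
        have := ((hasDerivAt_id s).const_sub t).const_mul (-δ₀)
        simpa using this
      have h2 := (h1.exp.div_const δ₀).mul_const Fmax
      exact h2.congr_deriv (by field_simp [hδ₀.ne'])
    rw [intervalIntegral.integral_eq_sub_of_hasDerivAt (fun s _ => hA s)
      (((continuous_const.mul (continuous_const.sub continuous_id)).rexp.mul
        continuous_const).intervalIntegrable _ _)]
    simp
    ring
  calc w t ≤ Real.exp (-(Θ t)) * I t := hwle
    _ = ∫ s in (0:ℝ)..t, Real.exp (Θ s - Θ t) * Fmax := hrw
    _ ≤ ∫ s in (0:ℝ)..t, Real.exp (-δ₀ * (t - s)) * Fmax := hmono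
    _ = (1 - Real.exp (-δ₀ * t)) / δ₀ * Fmax := hcalc
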